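/- Let X be a symmetric solution of CGDARE(Σ). Then the closed-loop matrix A_X is singular if and only if rank R < rank R_X or the matrix A − B R† Sᵀ is singular. -/

import Mathlib

open Matrix

-- The Moore–Penrose pseudoinverse of a real matrix, characterised by the four
-- Penrose equations (it exists and is unique for every real matrix).
open Classical in
noncomputable def mpinv {α β : Type*} [Fintype α] [Fintype β]
    (M : Matrix α β ℝ) : Matrix β α ℝ :=
  if h : ∃ P : Matrix β α ℝ,
      M * P * M = M ∧ P * M * P = P ∧ (M * P)ᵀ = M * P ∧ (P * M)ᵀ = P * M
  then h.choose else 0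

/-- `R_X = R + BᵀXB`. -/
noncomputable def RX {ι κ : Type*} [Fintype ι] [Fintype κ]
    (R : Matrix κ κ ℝ) (B : Matrix ι κ ℝ) (X : Matrix ι ι ℝ) : Matrix κ κ ℝ :=
  R + Bᵀ * X * B

/-- `S_X = AᵀXB + S`. -/
noncomputable def SX {ι κ : Type*} [Fintype ι] [Fintype κ]
    (A : Matrix ι ι ℝ) (B S : Matrix ι κ ℝ) (X : Matrix ι ι ℝ) : Matrix ι κ ℝ :=
  Aᵀ * X * B + S

/-- `K_X = R_X† S_Xᵀ`. -/
noncomputable def KX {ι κ : Type*} [Fintype ι] [Fintype κ]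
    (A : Matrix ι ι ℝ) (B S : Matrix ι κ ℝ) (R : Matrix κ κ ℝ) (X : Matrix ι ι ℝ) :
    Matrix κ ι ℝ :=
  mpinv (RX R B X) * (SX A B S X)ᵀ

/-- The closed-loop matrix `A_X = A - B K_X`. -/
noncomputable def AX {ι κ : Type*} [Fintype ι] [Fintype κ]
    (A : Matrix ι ι ℝ) (B S : Matrix ι κ ℝ) (R : Matrix κ κ ℝ) (X : Matrix ι ι ℝ) :
    Matrix ι ι ℝ :=
  A - B * KX A B S R X

/-- The kernel condition `ker R_X ⊆ ker S_X`. -/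
def KerCond {ι κ : Type*} [Fintype ι] [Fintype κ]
    (A : Matrix ι ι ℝ) (B S : Matrix ι κ ℝ) (R : Matrix κ κ ℝ) (X : Matrix ι ι ℝ) : Prop :=
  ∀ v : κ → ℝ, (RX R B X).mulVec v = 0 → (SX A B S X).mulVec v = 0

/-- The Riccati operator `𝔇(X) = X - AᵀXA + S_X R_X† S_Xᵀ - Q`. -/
noncomputable def DOp {ι κ : Type*} [Fintype ι] [Fintype κ]
    (A Q : Matrix ι ι ℝ) (B S : Matrix ι κ ℝ) (R : Matrix κ κ ℝ) (X : Matrix ι ι ℝ) :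
    Matrix ι ι ℝ :=
  X - Aᵀ * X * A + SX A B S X * mpinv (RX R B X) * (SX A B S X)ᵀ - Q

/-- The Riccati map `ℛ(X) = AᵀXA - S_X R_X† S_Xᵀ + Q`. -/
noncomputable def Ricc {ι κ : Type*} [Fintype ι] [Fintype κ]
    (A Q : Matrix ι ι ℝ) (B S : Matrix ι κ ℝ) (R : Matrix κ κ ℝ) (X : Matrix ι ι ℝ) :
    Matrix ι ι ℝ :=
  Aᵀ * X * A - SX A B S X * mpinv (RX R B X) * (SX A B S X)ᵀ + Q

/-- `X` is a symmetric solution of CGDARE(Σ): it is symmetric, satisfies the GDARE and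
the kernel condition `ker R_X ⊆ ker S_X`. -/
def IsCGDARESolution {ι κ : Type*} [Fintype ι] [Fintype κ]
    (A Q : Matrix ι ι ℝ) (B S : Matrix ι κ ℝ) (R : Matrix κ κ ℝ) (X : Matrix ι ι ℝ) : Prop :=
  Xᵀ = X ∧ X = Ricc A Q B S R X ∧ KerCond A B S R X

/-- The matrix `N = [[A, 0, B], [Q, -I, S], [Sᵀ, 0, R]]` of the extended symplectic pencil. -/
noncomputable def Nmat {n m : ℕ} (A Q : Matrix (Fin n) (Fin n) ℝ)
    (B S : Matrix (Fin n) (Fin m) ℝ) (R : Matrix (Fin m) (Fin m) ℝ) :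
    Matrix (Fin n ⊕ (Fin n ⊕ Fin m)) (Fin n ⊕ (Fin n ⊕ Fin m)) ℝ :=
  fromBlocks A (fromCols 0 B) (fromRows Q Sᵀ) (fromBlocks (-1) S 0 R)

/-- The matrix `M = [[I, 0, 0], [0, -Aᵀ, 0], [0, -Bᵀ, 0]]` of the extended symplectic pencil. -/
noncomputable def Mmat {n m : ℕ} (A : Matrix (Fin n) (Fin n) ℝ)
    (B : Matrix (Fin n) (Fin m) ℝ) :
    Matrix (Fin n ⊕ (Fin n ⊕ Fin m)) (Fin n ⊕ (Fin n ⊕ Fin m)) ℝ :=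
  fromBlocks 1 0 0 (fromBlocks (-Aᵀ) 0 (-Bᵀ) 0)

section MPAux

lemma realCT {a b : Type*} [Fintype a] [Fintype b] (M : Matrix a b ℝ) : Mᴴ = Mᵀ := by
  ext i j; simp [Matrix.conjTranspose_apply]

variable {κ : Type*} [Fintype κ] [DecidableEq κ]

lemma exists_pinv {M : Matrix κ κ ℝ} (hM : Mᵀ = M) :
    ∃ P : Matrix κ κ ℝ,
      M * P * M = M ∧ P * M * P = P ∧ (M * P)ᵀ = M * P ∧ (P * M)ᵀ = P * M := by
  have hH : M.IsHermitian := by rw [Matrix.IsHermitian, realCT]; exact hM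
  obtain ⟨U, d, hU2, hspec⟩ :
      ∃ (U : Matrix κ κ ℝ) (d : κ → ℝ), star U * U = 1 ∧
        M = U * Matrix.diagonal d * star U := by
    refine ⟨(hH.eigenvectorUnitary : Matrix κ κ ℝ), hH.eigenvalues,
      Matrix.mem_unitaryGroup_iff'.mp hH.eigenvectorUnitary.2, ?_⟩
    have h := hH.spectral_theorem
    simpa using h
  have key : ∀ e f : κ → ℝ, (U * Matrix.diagonal e * star U) * (U * Matrix.diagonal f * star U)
      = U * Matrix.diagonal (e * f) * star U := by
    intro e f
    have h1 : star U * (U * Matrix.diagonal f * star U) = Matrix.diagonal f * star U := by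
      rw [← Matrix.mul_assoc, ← Matrix.mul_assoc, hU2, Matrix.one_mul]
    calc (U * Matrix.diagonal e * star U) * (U * Matrix.diagonal f * star U)
        = U * Matrix.diagonal e * (star U * (U * Matrix.diagonal f * star U)) := by
          rw [Matrix.mul_assoc]
      _ = U * Matrix.diagonal e * (Matrix.diagonal f * star U) := by rw [h1]
      _ = U * (Matrix.diagonal e * Matrix.diagonal f) * star U := by
          simp only [Matrix.mul_assoc]
      _ = U * Matrix.diagonal (e * f) * star U := by
          rw [Matrix.diagonal_mul_diagonal]
          rfl
  have hsymm : ∀ e : κ → ℝ, (U * Matrix.diagonal e * star U)ᵀ = U * Matrix.diagonal e * star U := by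
    intro e
    have hstar : star U = Uᵀ := by rw [Matrix.star_eq_conjTranspose, realCT]
    rw [hstar, Matrix.transpose_mul, Matrix.transpose_mul, Matrix.transpose_transpose,
      Matrix.diagonal_transpose, Matrix.mul_assoc]
  set g : κ → ℝ := fun i => (d i)⁻¹ with hg
  have hdgd : d * g * d = d := by
    funext i
    rcases eq_or_ne (d i) 0 with h | h
    · simp [hg, Pi.mul_apply, h]
    · simp only [hg, Pi.mul_apply]; field_simp
  have hgdg : g * d * g = g := by
    funext i
    rcases eq_or_ne (d i) 0 with h | h
    · simp [hg, Pi.mul_apply, h]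
    · simp only [hg, Pi.mul_apply]; field_simp
  refine ⟨U * Matrix.diagonal g * star U, ?_, ?_, ?_, ?_⟩
  · rw [hspec, key, key, hdgd]
  · rw [hspec, key, key, hgdg]
  · rw [hspec, key]; exact hsymm _
  · rw [hspec, key]; exact hsymm _

lemma pinv_unique {M P Q : Matrix κ κ ℝ}
    (hP : M * P * M = M ∧ P * M * P = P ∧ (M * P)ᵀ = M * P ∧ (P * M)ᵀ = P * M)
    (hQ : M * Q * M = M ∧ Q * M * Q = Q ∧ (M * Q)ᵀ = M * Q ∧ (Q * M)ᵀ = Q * M) :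
    P = Q := by
  obtain ⟨hP1, hP2, hP3, hP4⟩ := hP
  obtain ⟨hQ1, hQ2, hQ3, hQ4⟩ := hQ
  have hMP : M * P = M * Q := by
    have e1 : M * P = Pᵀ * Mᵀ := by rw [← Matrix.transpose_mul, hP3]
    have e2 : Mᵀ = Mᵀ * (Qᵀ * Mᵀ) := by
      calc Mᵀ = (M * Q * M)ᵀ := by rw [hQ1]
        _ = Mᵀ * (M * Q)ᵀ := by rw [Matrix.transpose_mul]
        _ = Mᵀ * (Qᵀ * Mᵀ) := by rw [Matrix.transpose_mul]
    calc M * P = Pᵀ * Mᵀ := e1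
      _ = Pᵀ * (Mᵀ * (Qᵀ * Mᵀ)) := by rw [← e2]
      _ = (Pᵀ * Mᵀ) * (Qᵀ * Mᵀ) := by rw [Matrix.mul_assoc]
      _ = (M * P) * (M * Q) := by rw [← Matrix.transpose_mul, ← Matrix.transpose_mul, hP3, hQ3]
      _ = (M * P * M) * Q := by simp only [Matrix.mul_assoc]
      _ = M * Q := by rw [hP1]
  have hPM : P * M = Q * M := by
    have e1 : P * M = Mᵀ * Pᵀ := by rw [← Matrix.transpose_mul, hP4]
    have e2 : Mᵀ = (Mᵀ * Qᵀ) * Mᵀ := by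
      calc Mᵀ = (M * Q * M)ᵀ := by rw [hQ1]
        _ = Mᵀ * (M * Q)ᵀ := by rw [Matrix.transpose_mul]
        _ = Mᵀ * (Qᵀ * Mᵀ) := by rw [Matrix.transpose_mul]
        _ = (Mᵀ * Qᵀ) * Mᵀ := by rw [Matrix.mul_assoc]
    calc P * M = Mᵀ * Pᵀ := e1
      _ = ((Mᵀ * Qᵀ) * Mᵀ) * Pᵀ := by rw [← e2]
      _ = (Mᵀ * Qᵀ) * (Mᵀ * Pᵀ) := by simp only [Matrix.mul_assoc]
      _ = (Q * M)ᵀ * (P * M)ᵀ := by rw [Matrix.transpose_mul, Matrix.transpose_mul]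
      _ = (Q * M) * (P * M) := by rw [hQ4, hP4]
      _ = Q * (M * P * M) := by simp only [Matrix.mul_assoc]
      _ = Q * M := by rw [hP1]
  calc P = P * M * P := hP2.symm
    _ = Q * M * P := by rw [hPM]
    _ = Q * (M * P) := by rw [Matrix.mul_assoc]
    _ = Q * (M * Q) := by rw [hMP]
    _ = Q * M * Q := by rw [← Matrix.mul_assoc]
    _ = Q := hQ2

lemma mpinv_spec {M : Matrix κ κ ℝ} (hM : Mᵀ = M) :
    M * mpinv M * M = M ∧ mpinv M * M * mpinv M = mpinv M ∧
      (M * mpinv M)ᵀ = M * mpinv M ∧ (mpinv M * M)ᵀ = mpinv M * M := by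
  have h := exists_pinv hM
  rw [mpinv, dif_pos h]
  exact h.choose_spec

lemma mpinv_symm {M : Matrix κ κ ℝ} (hM : Mᵀ = M) : (mpinv M)ᵀ = mpinv M := by
  obtain ⟨h1, h2, h3, h4⟩ := mpinv_spec hM
  set P := mpinv M with hP
  have hPt : M * Pᵀ * M = M ∧ Pᵀ * M * Pᵀ = Pᵀ ∧ (M * Pᵀ)ᵀ = M * Pᵀ ∧ (Pᵀ * M)ᵀ = Pᵀ * M := by
    refine ⟨?_, ?_, ?_, ?_⟩
    · calc M * Pᵀ * M = (Mᵀ * P * Mᵀ)ᵀ := by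
            simp [Matrix.transpose_mul, Matrix.mul_assoc]
      _ = (M * P * M)ᵀ := by rw [hM]
      _ = M := by rw [h1, hM]
    · calc Pᵀ * M * Pᵀ = (P * Mᵀ * P)ᵀ := by
            simp [Matrix.transpose_mul, Matrix.mul_assoc]
      _ = (P * M * P)ᵀ := by rw [hM]
      _ = Pᵀ := by rw [h2]
    · calc (M * Pᵀ)ᵀ = P * Mᵀ := by rw [Matrix.transpose_mul, Matrix.transpose_transpose]
      _ = P * M := by rw [hM]
      _ = (P * M)ᵀ := by rw [h4]
      _ = Mᵀ * Pᵀ := by rw [Matrix.transpose_mul]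
      _ = M * Pᵀ := by rw [hM]
    · calc (Pᵀ * M)ᵀ = Mᵀ * P := by rw [Matrix.transpose_mul, Matrix.transpose_transpose]
      _ = M * P := by rw [hM]
      _ = (M * P)ᵀ := by rw [h3]
      _ = Pᵀ * Mᵀ := by rw [Matrix.transpose_mul]
      _ = Pᵀ * M := by rw [hM]
  exact pinv_unique hPt ⟨h1, h2, h3, h4⟩

end MPAux

section GenHelpers

lemma dotT {p q : Type*} [Fintype p] [Fintype q] (M : Matrix p q ℝ) (x : q → ℝ) (z : p → ℝ) :
    x ⬝ᵥ Mᵀ *ᵥ z = (M *ᵥ x) ⬝ᵥ z := by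
  rw [Matrix.dotProduct_mulVec, Matrix.vecMul_transpose]

lemma mul_eq_of_ker {κ κ' ι' : Type*} [Fintype κ] [Fintype κ'] [Fintype ι']
    {M : Matrix κ κ ℝ} {N : Matrix ι' κ ℝ}
    (h : ∀ v, M *ᵥ v = 0 → N *ᵥ v = 0) {C : Matrix κ κ' ℝ} (hC : M * C = 0) : N * C = 0 := by
  ext i j
  have h1 : M *ᵥ (fun k => C k j) = 0 := by
    funext i'
    have h2 := congrFun (congrFun hC i') j
    simpa [Matrix.mul_apply, Matrix.mulVec, dotProduct] using h2
  have h2 := congrFun (h _ h1) i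
  simpa [Matrix.mul_apply, Matrix.mulVec, dotProduct] using h2

end GenHelpers

set_option maxHeartbeats 2000000 in
/-- if `X` solves CGDARE(Σ), then `A_X` is singular iff `rank R < rank R_X`
or `A - B R† Sᵀ` is singular. -/
theorem stmt_5 {n m : ℕ} (hn : 0 < n) (hm : 0 < m)
    (A Q : Matrix (Fin n) (Fin n) ℝ) (B S : Matrix (Fin n) (Fin m) ℝ)
    (R : Matrix (Fin m) (Fin m) ℝ)
    (hPi : (fromBlocks Q S Sᵀ R).PosSemidef)
    (X : Matrix (Fin n) (Fin n) ℝ) (hX : IsCGDARESolution A Q B S R X) :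
    (AX A B S R X).det = 0 ↔
      R.rank < (RX R B X).rank ∨ (A - B * mpinv R * Sᵀ).det = 0 := by
  classical
  obtain ⟨hXs, hRic, hkerc⟩ := hX
  set RXm := RX R B X with hRXdef
  set SXm := SX A B S X with hSXdef
  set G := mpinv RXm with hGdef
  set Gr := mpinv R with hGrdef
  set KXm := KX A B S R X with hKXdef
  set ACL := AX A B S R X with hACLdef
  have hRXe : RXm = R + Bᵀ * X * B := rfl
  have hSXe : SXm = Aᵀ * X * B + S := rfl
  have hKXe : KXm = G * SXmᵀ := rfl
  have hACLe : ACL = A - B * KXm := rfl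
  -- symmetry facts
  have hPiT : (fromBlocks Q S Sᵀ R)ᵀ = fromBlocks Q S Sᵀ R := by
    have h := hPi.1
    rwa [Matrix.IsHermitian, realCT] at h
  have hR : Rᵀ = R := by
    ext i j
    have h := congrFun (congrFun hPiT (Sum.inr i)) (Sum.inr j)
    simpa [Matrix.transpose_apply] using h
  have hRXs : RXmᵀ = RXm := by
    rw [hRXe]
    simp [Matrix.transpose_add, Matrix.transpose_mul, hXs, hR, Matrix.mul_assoc]
  have hSXt : SXmᵀ = Bᵀ * X * A + Sᵀ := by
    rw [hSXe]
    simp [Matrix.transpose_add, Matrix.transpose_mul, hXs, Matrix.mul_assoc]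
  -- Penrose facts
  obtain ⟨pRX1, pRX2, pRX3, pRX4⟩ := mpinv_spec hRXs
  obtain ⟨pR1, pR2, pR3, pR4⟩ := mpinv_spec hR
  rw [← hGdef] at pRX1 pRX2 pRX3 pRX4
  rw [← hGrdef] at pR1 pR2 pR3 pR4
  have hGs : Gᵀ = G := mpinv_symm hRXs
  have hGrs : Grᵀ = Gr := mpinv_symm hR
  -- rearranged definitions
  have hSe : S = SXm - Aᵀ * X * B := by rw [hSXe]; abel
  have hRe : R = RXm - Bᵀ * X * B := by rw [hRXe]; abel
  have hBXB : Bᵀ * X * B = RXm - R := by rw [hRe]; abel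
  -- the GDARE
  have hGD : X = Aᵀ * X * A - SXm * G * SXmᵀ + Q := hRic.trans rfl
  have hGDs : ∀ x : Fin n → ℝ, x ⬝ᵥ X *ᵥ x
      = x ⬝ᵥ (Aᵀ * X * A) *ᵥ x - x ⬝ᵥ (SXm * G * SXmᵀ) *ᵥ x + x ⬝ᵥ Q *ᵥ x := by
    intro x
    have h := congrArg (fun M : Matrix (Fin n) (Fin n) ℝ => x ⬝ᵥ M *ᵥ x) hGD
    simpa [Matrix.add_mulVec, Matrix.sub_mulVec, dotProduct_add,
      dotProduct_sub] using h
  -- positivity of the Popov quadratic form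
  have quad : ∀ (x : Fin n → ℝ) (u : Fin m → ℝ),
      0 ≤ x ⬝ᵥ Q *ᵥ x + x ⬝ᵥ S *ᵥ u + u ⬝ᵥ Sᵀ *ᵥ x + u ⬝ᵥ R *ᵥ u := by
    intro x u
    have h := hPi.dotProduct_mulVec_nonneg (Sum.elim x u)
    have hst : star (Sum.elim x u) = Sum.elim x u := by
      funext i; simp
    rw [hst, Matrix.fromBlocks_mulVec, sumElim_dotProduct_sumElim] at h
    simp only [Sum.elim_comp_inl, Sum.elim_comp_inr, dotProduct_add] at h
    linarith
  have hR0 : ∀ u : Fin m → ℝ, 0 ≤ u ⬝ᵥ R *ᵥ u := by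
    intro u
    have h := quad 0 u
    simpa using h
  have hRpsd : R.PosSemidef := by
    refine Matrix.PosSemidef.of_dotProduct_mulVec_nonneg ?_ ?_
    · rw [Matrix.IsHermitian, realCT]; exact hR
    · intro u
      have : star u = u := by funext i; simp
      rw [this]
      exact hR0 u
  -- ker R ⊆ ker S
  have hkerRS : ∀ v, R *ᵥ v = 0 → S *ᵥ v = 0 := by
    intro v hv
    have hb : ∀ x : Fin n → ℝ, x ⬝ᵥ S *ᵥ v = 0 := by
      intro x
      have ha : 0 ≤ x ⬝ᵥ Q *ᵥ x := by have h := quad x 0; simpa using h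
      have ht : ∀ t : ℝ, 0 ≤ t^2 * (x ⬝ᵥ Q *ᵥ x) + 2 * t * (x ⬝ᵥ S *ᵥ v) := by
        intro t
        have h := quad (t • x) v
        rw [hv] at h
        have e3 : v ⬝ᵥ Sᵀ *ᵥ (t • x) = t * (x ⬝ᵥ S *ᵥ v) := by
          rw [Matrix.mulVec_smul, dotProduct_smul, smul_eq_mul, dotT,
            dotProduct_comm]
        rw [e3] at h
        simp only [Matrix.mulVec_smul, smul_dotProduct, dotProduct_smul,
          smul_eq_mul, dotProduct_zero] at h
        nlinarith [h]
      set a := x ⬝ᵥ Q *ᵥ x with hadef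
      set b := x ⬝ᵥ S *ᵥ v with hbdef
      have hpos : (0:ℝ) < a + 1 := by linarith
      have h0 := ht (-(b/(a+1)))
      have keyv : (-(b/(a+1)))^2 * a + 2 * (-(b/(a+1))) * b = -(b^2*(a+2))/(a+1)^2 := by
        field_simp
        ring
      rw [keyv, le_div_iff₀ (by positivity : (0:ℝ) < (a+1)^2)] at h0
      have hb2 : b^2 = 0 := by nlinarith [sq_nonneg b]
      exact sq_eq_zero_iff.mp hb2
    have h := hb (S *ᵥ v)
    rwa [dotProduct_self_eq_zero] at h
  -- kernel condition consequences
  have hkerC : ∀ v, RXm *ᵥ v = 0 → SXm *ᵥ v = 0 := fun v hv => hkerc v hv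
  have hC2 : RXm * (1 - G * RXm) = 0 := by
    rw [Matrix.mul_sub, Matrix.mul_one, ← Matrix.mul_assoc, pRX1, sub_self]
  have hSC2 : SXm * (1 - G * RXm) = 0 := mul_eq_of_ker hkerC hC2
  have hSGR : SXm * G * RXm = SXm := by
    rw [Matrix.mul_sub, Matrix.mul_one, sub_eq_zero, ← Matrix.mul_assoc] at hSC2
    exact hSC2.symm
  have hRXK : RXm * KXm = SXmᵀ := by
    have h := congrArg Matrix.transpose hSGR
    rw [Matrix.transpose_mul, Matrix.transpose_mul, hGs, hRXs, ← Matrix.mul_assoc] at h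
    rw [hKXe, ← Matrix.mul_assoc]
    exact h
  have hKRX : KXmᵀ * RXm = SXm := by
    have h := congrArg Matrix.transpose hRXK
    rwa [Matrix.transpose_mul, hRXs, Matrix.transpose_transpose] at h
  -- THE KEY INEQUALITY
  have KI : ∀ (x : Fin n → ℝ) (u : Fin m → ℝ), RXm *ᵥ u = -(SXmᵀ *ᵥ x) →
      (A *ᵥ x + B *ᵥ u) ⬝ᵥ X *ᵥ (A *ᵥ x + B *ᵥ u) ≤ x ⬝ᵥ X *ᵥ x := by
    intro x u hu
    have hq := quad x u
    have eAXA : x ⬝ᵥ (Aᵀ * X * A) *ᵥ x = (A *ᵥ x) ⬝ᵥ X *ᵥ (A *ᵥ x) := by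
      rw [← Matrix.mulVec_mulVec, ← Matrix.mulVec_mulVec, dotT]
    have hu2 : SXmᵀ *ᵥ x = -(RXm *ᵥ u) := by rw [hu, neg_neg]
    have eSGS : x ⬝ᵥ (SXm * G * SXmᵀ) *ᵥ x = -(x ⬝ᵥ SXm *ᵥ u) := by
      rw [← Matrix.mulVec_mulVec, ← Matrix.mulVec_mulVec, hu2, Matrix.mulVec_neg,
        Matrix.mulVec_neg, dotProduct_neg, Matrix.mulVec_mulVec,
        Matrix.mulVec_mulVec, hSGR]
    have eAXB : x ⬝ᵥ (Aᵀ * X * B) *ᵥ u = (A *ᵥ x) ⬝ᵥ X *ᵥ (B *ᵥ u) := by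
      rw [← Matrix.mulVec_mulVec, ← Matrix.mulVec_mulVec, dotT]
    have eS : x ⬝ᵥ S *ᵥ u = x ⬝ᵥ SXm *ᵥ u - (A *ᵥ x) ⬝ᵥ X *ᵥ (B *ᵥ u) := by
      have h := congrArg (fun M : Matrix (Fin n) (Fin m) ℝ => x ⬝ᵥ M *ᵥ u) hSe
      simp only [Matrix.sub_mulVec, dotProduct_sub] at h
      rw [h, eAXB]
    have eSt : u ⬝ᵥ Sᵀ *ᵥ x = x ⬝ᵥ S *ᵥ u := by
      rw [dotT, dotProduct_comm]
    have eBXB : u ⬝ᵥ (Bᵀ * X * B) *ᵥ u = (B *ᵥ u) ⬝ᵥ X *ᵥ (B *ᵥ u) := by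
      rw [← Matrix.mulVec_mulVec, ← Matrix.mulVec_mulVec, dotT]
    have eRXu : u ⬝ᵥ RXm *ᵥ u = -(x ⬝ᵥ SXm *ᵥ u) := by
      rw [hu, dotProduct_neg, dotT, dotProduct_comm]
    have eR : u ⬝ᵥ R *ᵥ u = -(x ⬝ᵥ SXm *ᵥ u) - (B *ᵥ u) ⬝ᵥ X *ᵥ (B *ᵥ u) := by
      have h := congrArg (fun M : Matrix (Fin m) (Fin m) ℝ => u ⬝ᵥ M *ᵥ u) hRe
      simp only [Matrix.sub_mulVec, dotProduct_sub] at h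
      rw [h, eRXu, eBXB]
    have eXsym : (B *ᵥ u) ⬝ᵥ X *ᵥ (A *ᵥ x) = (A *ᵥ x) ⬝ᵥ X *ᵥ (B *ᵥ u) := by
      have h := dotT X (B *ᵥ u) (A *ᵥ x)
      rw [hXs] at h
      rw [h, dotProduct_comm]
    have eY : (A *ᵥ x + B *ᵥ u) ⬝ᵥ X *ᵥ (A *ᵥ x + B *ᵥ u)
        = (A *ᵥ x) ⬝ᵥ X *ᵥ (A *ᵥ x) + 2 * ((A *ᵥ x) ⬝ᵥ X *ᵥ (B *ᵥ u))
          + (B *ᵥ u) ⬝ᵥ X *ᵥ (B *ᵥ u) := by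
      simp only [Matrix.mulVec_add, dotProduct_add, add_dotProduct]
      rw [eXsym]; ring
    have hx := hGDs x
    rw [eAXA, eSGS] at hx
    rw [eS, eSt, eR] at hq
    rw [eY]
    linarith
  -- LEMMA L : ker R_X ⊆ ker R
  have hLker : ∀ v, RXm *ᵥ v = 0 → R *ᵥ v = 0 := by
    intro v hv
    have hSv : SXm *ᵥ v = 0 := hkerC v hv
    -- Cayley-Hamilton sequence
    set p := ACL.charpoly with hp
    set Cm : ℕ → Matrix (Fin n) (Fin n) ℝ :=
      fun j => ACL^j + ∑ i ∈ Finset.range j, p.coeff (n - j + i) • ACL^i with hCdef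
    have hC0' : Cm 0 = 1 := by simp [hCdef]
    have hstep : ∀ j, j < n → Cm (j+1) = ACL * Cm j + p.coeff (n - 1 - j) • 1 := by
      intro j hj
      rw [hCdef]
      simp only
      rw [Finset.sum_range_succ']
      have e0 : p.coeff (n - (j+1) + 0) • ACL^0 = p.coeff (n - 1 - j) • (1 : Matrix (Fin n) (Fin n) ℝ) := by
        rw [pow_zero]
        have hidx : n - (j+1) + 0 = n - 1 - j := by omega
        rw [hidx]
      have e1 : ∀ i ∈ Finset.range j,
          p.coeff (n - (j+1) + (i+1)) • ACL^(i+1) = ACL * (p.coeff (n - j + i) • ACL^i) := by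
        intro i _
        rw [mul_smul_comm, ← pow_succ']
        have : n - (j+1) + (i+1) = n - j + i := by omega
        rw [this]
      rw [Finset.sum_congr rfl e1, e0, Matrix.mul_add, Finset.mul_sum, ← pow_succ']
      abel
    have hCn : Cm n = 0 := by
      have hdeg : p.natDegree = n := by
        rw [hp, Matrix.charpoly_natDegree_eq_dim, Fintype.card_fin]
      have hmon : p.Monic := Matrix.charpoly_monic ACL
      have haev : (Polynomial.aeval ACL) p = 0 := Matrix.aeval_self_charpoly ACL
      rw [Polynomial.aeval_eq_sum_range, hdeg, Finset.sum_range_succ] at haev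
      have hcn : p.coeff n = 1 := by rw [← hdeg]; exact hmon.coeff_natDegree
      rw [hcn, one_smul] at haev
      rw [hCdef]
      simp only
      have e2 : ∀ i ∈ Finset.range n, p.coeff (n - n + i) • ACL^i = p.coeff i • ACL^i := by
        intro i _
        have : n - n + i = i := by omega
        rw [this]
      rw [Finset.sum_congr rfl e2, add_comm]
      exact haev
    have hmono : ∀ j, j < n →
        (Cm (j+1) *ᵥ (B *ᵥ v)) ⬝ᵥ X *ᵥ (Cm (j+1) *ᵥ (B *ᵥ v))
          ≤ (Cm j *ᵥ (B *ᵥ v)) ⬝ᵥ X *ᵥ (Cm j *ᵥ (B *ᵥ v)) := by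
      intro j hj
      have hu : RXm *ᵥ (p.coeff (n-1-j) • v - KXm *ᵥ (Cm j *ᵥ (B *ᵥ v)))
          = -(SXmᵀ *ᵥ (Cm j *ᵥ (B *ᵥ v))) := by
        rw [Matrix.mulVec_sub, Matrix.mulVec_smul, hv, smul_zero,
          Matrix.mulVec_mulVec, hRXK, zero_sub]
      have happ := KI (Cm j *ᵥ (B *ᵥ v)) (p.coeff (n-1-j) • v - KXm *ᵥ (Cm j *ᵥ (B *ᵥ v))) hu
      have harg : A *ᵥ (Cm j *ᵥ (B *ᵥ v))
            + B *ᵥ (p.coeff (n-1-j) • v - KXm *ᵥ (Cm j *ᵥ (B *ᵥ v)))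
          = Cm (j+1) *ᵥ (B *ᵥ v) := by
        have hrhs : Cm (j+1) *ᵥ (B *ᵥ v)
            = ACL *ᵥ (Cm j *ᵥ (B *ᵥ v)) + p.coeff (n-1-j) • (B *ᵥ v) := by
          conv_lhs => rw [hstep j hj]
          rw [Matrix.add_mulVec, Matrix.smul_mulVec, Matrix.one_mulVec,
            ← Matrix.mulVec_mulVec]
        have hACLv : ACL *ᵥ (Cm j *ᵥ (B *ᵥ v))
            = A *ᵥ (Cm j *ᵥ (B *ᵥ v)) - B *ᵥ (KXm *ᵥ (Cm j *ᵥ (B *ᵥ v))) := by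
          rw [hACLe]
          simp [Matrix.sub_mul, Matrix.sub_mulVec, Matrix.mulVec_mulVec, Matrix.mul_assoc]
        rw [hrhs, hACLv, Matrix.mulVec_sub, Matrix.mulVec_smul]
        abel
      rw [harg] at happ
      exact happ
    have hchain : ∀ j, j ≤ n →
        (Cm j *ᵥ (B *ᵥ v)) ⬝ᵥ X *ᵥ (Cm j *ᵥ (B *ᵥ v)) ≤ (B *ᵥ v) ⬝ᵥ X *ᵥ (B *ᵥ v) := by
      intro j
      induction j with
      | zero => intro _; rw [hC0', Matrix.one_mulVec]
      | succ k ih =>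
        intro hk
        exact le_trans (hmono k (by omega)) (ih (by omega))
    have hw : 0 ≤ (B *ᵥ v) ⬝ᵥ X *ᵥ (B *ᵥ v) := by
      have h := hchain n le_rfl
      rw [hCn, Matrix.zero_mulVec] at h
      simpa using h
    have hRv : v ⬝ᵥ R *ᵥ v = -((B *ᵥ v) ⬝ᵥ X *ᵥ (B *ᵥ v)) := by
      have h := congrArg (fun M : Matrix (Fin m) (Fin m) ℝ => v ⬝ᵥ M *ᵥ v) hRe
      simp only [Matrix.sub_mulVec, dotProduct_sub] at h
      rw [h, hv, dotProduct_zero, zero_sub]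
      congr 1
      rw [← Matrix.mulVec_mulVec, ← Matrix.mulVec_mulVec, dotT]
    have h3 : v ⬝ᵥ R *ᵥ v = 0 := le_antisymm (by linarith [hR0 v]) (hR0 v)
    have h4 : star v ⬝ᵥ R *ᵥ v = 0 := by
      have : star v = v := by funext i; simp
      rw [this]; exact h3
    exact (hRpsd.dotProduct_mulVec_zero_iff v).mp h4
  -- the main case split
  by_cases hcase : ∀ v, R *ᵥ v = 0 → RXm *ᵥ v = 0
  · -- equal kernels
    have hC1 : R * (1 - Gr * R) = 0 := by
      rw [Matrix.mul_sub, Matrix.mul_one, ← Matrix.mul_assoc, pR1, sub_self]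
    have hRXC1 : RXm * (1 - Gr * R) = 0 := mul_eq_of_ker hcase hC1
    have hSC1 : S * (1 - Gr * R) = 0 := mul_eq_of_ker hkerRS hC1
    have hRC2 : R * (1 - G * RXm) = 0 := mul_eq_of_ker hLker hC2
    have hRXGrR : RXm * Gr * R = RXm := by
      rw [Matrix.mul_sub, Matrix.mul_one, sub_eq_zero, ← Matrix.mul_assoc] at hRXC1
      exact hRXC1.symm
    have hSGrR : S * Gr * R = S := by
      rw [Matrix.mul_sub, Matrix.mul_one, sub_eq_zero, ← Matrix.mul_assoc] at hSC1
      exact hSC1.symm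
    have hRGRX : R * G * RXm = R := by
      rw [Matrix.mul_sub, Matrix.mul_one, sub_eq_zero, ← Matrix.mul_assoc] at hRC2
      exact hRC2.symm
    have hRGrRX : R * Gr * RXm = RXm := by
      have h := congrArg Matrix.transpose hRXGrR
      rwa [Matrix.transpose_mul, Matrix.transpose_mul, hR, hGrs, hRXs,
        ← Matrix.mul_assoc] at h
    have hRXGR : RXm * G * R = R := by
      have h := congrArg Matrix.transpose hRGRX
      rwa [Matrix.transpose_mul, Matrix.transpose_mul, hR, hGs, hRXs,
        ← Matrix.mul_assoc] at h
    have hGrST : R * Gr * Sᵀ = Sᵀ := by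
      have h := congrArg Matrix.transpose hSGrR
      rwa [Matrix.transpose_mul, Matrix.transpose_mul, hR, hGrs,
        ← Matrix.mul_assoc] at h
    have hPP : R * Gr = RXm * G := by
      have h1 : (R * Gr) * (RXm * G) = RXm * G := by
        rw [← Matrix.mul_assoc, hRGrRX]
      have h2 : (RXm * G) * (R * Gr) = R * Gr := by
        rw [← Matrix.mul_assoc, hRXGR]
      have h := congrArg Matrix.transpose h1
      rw [Matrix.transpose_mul, pR3, pRX3, h2] at h
      exact h
    -- commutation facts
    have hGRXc : G * RXm = RXm * G := by
      have h := pRX4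
      rw [Matrix.transpose_mul, hGs, hRXs] at h
      exact h.symm
    have hGrRc : Gr * R = R * Gr := by
      have h := pR4
      rw [Matrix.transpose_mul, hGrs, hR] at h
      exact h.symm
    -- collapse identities
    have hGRXm2 : G * RXm = Gr * R := by rw [hGRXc, ← hPP, ← hGrRc]
    have hGRXGr : G * RXm * Gr = Gr := by rw [hGRXm2, pR2]
    have hGRGr : G * R * Gr = G := by
      rw [Matrix.mul_assoc, hPP, ← Matrix.mul_assoc, pRX2]
    have collapse : G * (RXm - R) * Gr = Gr - G := by
      rw [Matrix.mul_sub, Matrix.sub_mul, hGRXGr, hGRGr]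
    have hTT : (1 - B*G*(Bᵀ*X)) * (1 + B*Gr*(Bᵀ*X)) = 1 := by
      have expand : (1 - B*G*(Bᵀ*X)) * (1 + B*Gr*(Bᵀ*X))
          = 1 + B*Gr*(Bᵀ*X) - B*G*(Bᵀ*X) - B*(G*(Bᵀ*X*B)*Gr)*(Bᵀ*X) := by
        simp only [Matrix.mul_sub, Matrix.sub_mul, Matrix.mul_add, Matrix.add_mul,
          Matrix.mul_one, Matrix.one_mul, Matrix.mul_assoc]
        abel
      rw [expand, hBXB, collapse]
      simp only [Matrix.mul_sub, Matrix.sub_mul, Matrix.mul_add, Matrix.add_mul,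
        Matrix.mul_one, Matrix.one_mul, Matrix.mul_assoc]
      abel
    have hTA : (1 - B*G*(Bᵀ*X)) * (A - B*Gr*Sᵀ) = ACL := by
      have expand2 : (1 - B*G*(Bᵀ*X)) * (A - B*Gr*Sᵀ)
          = A - B*Gr*Sᵀ - B*G*(Bᵀ*X)*A + B*(G*(Bᵀ*X*B)*Gr)*Sᵀ := by
        simp only [Matrix.mul_sub, Matrix.sub_mul, Matrix.mul_add, Matrix.add_mul,
          Matrix.mul_one, Matrix.one_mul, Matrix.mul_assoc]
        abel
      have hKXe2 : KXm = G * (Bᵀ*X*A + Sᵀ) := by rw [hKXe, hSXt]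
      rw [expand2, hBXB, collapse, hACLe, hKXe2]
      simp only [Matrix.mul_sub, Matrix.sub_mul, Matrix.mul_add, Matrix.add_mul,
        Matrix.mul_one, Matrix.one_mul, Matrix.mul_assoc]
      abel
    have hdeteq : ACL.det = (1 - B*G*(Bᵀ*X)).det * (A - B*Gr*Sᵀ).det := by
      rw [← hTA, Matrix.det_mul]
    have hTdet : (1 - B*G*(Bᵀ*X)).det ≠ 0 := by
      intro h0
      have h := congrArg Matrix.det hTT
      rw [Matrix.det_mul, h0, zero_mul, Matrix.det_one] at h
      exact zero_ne_one h
    have hkereq : LinearMap.ker R.mulVecLin = LinearMap.ker RXm.mulVecLin := by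
      apply le_antisymm
      · intro z hz
        rw [LinearMap.mem_ker, Matrix.mulVecLin_apply] at hz ⊢
        exact hcase z hz
      · intro z hz
        rw [LinearMap.mem_ker, Matrix.mulVecLin_apply] at hz ⊢
        exact hLker z hz
    have hranks : R.rank = RXm.rank := by
      have e1 := LinearMap.finrank_range_add_finrank_ker R.mulVecLin
      have e2 := LinearMap.finrank_range_add_finrank_ker RXm.mulVecLin
      rw [hkereq] at e1
      unfold Matrix.rank
      omega
    constructor
    · intro h
      right
      rcases mul_eq_zero.mp (by rw [← hdeteq]; exact h) with h1 | h1
      · exact absurd h1 hTdet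
      · exact h1
    · intro h
      rcases h with h1 | h1
      · rw [hranks] at h1; exact absurd h1 (lt_irrefl _)
      · rw [hdeteq, h1, mul_zero]
  · push_neg at hcase
    obtain ⟨v, hv1, hv2⟩ := hcase
    have hSv : S *ᵥ v = 0 := hkerRS v hv1
    -- det ACL = 0
    have hmat : ACLᵀ * X * B = KXmᵀ * R - S := by
      rw [hACLe, Matrix.transpose_sub, Matrix.transpose_mul, Matrix.sub_mul, Matrix.sub_mul]
      have e1 : Aᵀ * X * B = SXm - S := by rw [hSXe]; abel
      have e2 : KXmᵀ * Bᵀ * X * B = SXm - KXmᵀ * R := by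
        rw [Matrix.mul_assoc (KXmᵀ * Bᵀ) X B, Matrix.mul_assoc KXmᵀ Bᵀ (X * B),
          ← Matrix.mul_assoc Bᵀ X B, hBXB, Matrix.mul_sub, hKRX]
      rw [e1, e2]
      abel
    have hu0 : ACLᵀ *ᵥ (X *ᵥ (B *ᵥ v)) = 0 := by
      rw [Matrix.mulVec_mulVec, Matrix.mulVec_mulVec, hmat, Matrix.sub_mulVec,
        ← Matrix.mulVec_mulVec, hv1, Matrix.mulVec_zero, hSv, sub_zero]
    have hune : X *ᵥ (B *ᵥ v) ≠ 0 := by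
      intro h0
      apply hv2
      have h := congrArg (fun M : Matrix (Fin m) (Fin m) ℝ => M *ᵥ v) hRXe
      simp only [Matrix.add_mulVec] at h
      rw [h, hv1, zero_add, ← Matrix.mulVec_mulVec, ← Matrix.mulVec_mulVec, h0,
        Matrix.mulVec_zero]
    have hdet : ACL.det = 0 := by
      have h : ACLᵀ.det = 0 := (Matrix.exists_mulVec_eq_zero_iff).mp ⟨_, hune, hu0⟩
      rwa [Matrix.det_transpose] at h
    have hrank : R.rank < RXm.rank := by
      have hle : LinearMap.ker RXm.mulVecLin ≤ LinearMap.ker R.mulVecLin := by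
        intro z hz
        rw [LinearMap.mem_ker] at hz ⊢
        rw [Matrix.mulVecLin_apply] at hz ⊢
        exact hLker z hz
      have hlt : LinearMap.ker RXm.mulVecLin < LinearMap.ker R.mulVecLin := by
        refine lt_of_le_of_ne hle ?_
        intro heq
        apply hv2
        have : v ∈ LinearMap.ker R.mulVecLin := by
          rw [LinearMap.mem_ker, Matrix.mulVecLin_apply]; exact hv1
        rw [← heq, LinearMap.mem_ker, Matrix.mulVecLin_apply] at this
        exact this
      have hfr := Submodule.finrank_lt_finrank_of_lt hlt
      have e1 := LinearMap.finrank_range_add_finrank_ker R.mulVecLin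
      have e2 := LinearMap.finrank_range_add_finrank_ker RXm.mulVecLin
      unfold Matrix.rank
      omega
    exact iff_of_true hdet (Or.inl hrank)
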